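/- arXiv:1701.07593 — 2 statements merged into one kernel-verified Lean document; each statement's English description precedes it below -/
import Mathlib

section
/- Let R be a commutative ring of prime characteristic p and let D : R → R be a derivation. Then the p-fold composite D^p = D ∘ D ∘ ⋯ ∘ D (p times) is again a derivation of R. -/
open Finset Nat

/-- Hochschild's lemma: over a commutative ring of prime characteristic p,
the p-fold composite of a derivation is again a derivation. -/
theorem iterate_derivation_is_derivation
    (R : Type*) [CommRing R] (p : ℕ) [Fact p.Prime] [CharP R p]
    (D : R → R)
    (hadd : ∀ a b : R, D (a + b) = D a + D b)
    (hmul : ∀ a b : R, D (a * b) = a * D b + b * D a) :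
    (∀ a b : R, D^[p] (a + b) = D^[p] a + D^[p] b) ∧
    (∀ a b : R, D^[p] (a * b) = a * D^[p] b + b * D^[p] a) := by
  have h0 : D 0 = 0 := by
    have h := hadd 0 0
    rw [add_zero] at h
    exact (add_eq_left.mp h.symm)
  have h1 : D 1 = 0 := by
    have h := hmul 1 1
    rw [mul_one, one_mul] at h
    exact (add_eq_left.mp h.symm)
  have hcast : ∀ n : ℕ, D (n : R) = 0 := by
    intro n
    induction n with
    | zero => simpa using h0
    | succ n ih => push_cast; rw [hadd, ih, h1, add_zero]
  have hconst : ∀ (n : ℕ) (x : R), D ((n : R) * x) = (n : R) * D x := by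
    intro n x
    rw [hmul, hcast, mul_zero, add_zero]
  have hiter_add : ∀ (n : ℕ) (a b : R), D^[n] (a + b) = D^[n] a + D^[n] b := by
    intro n
    induction n with
    | zero => intro a b; simp
    | succ n ih =>
      intro a b
      rw [Function.iterate_succ_apply', Function.iterate_succ_apply',
        Function.iterate_succ_apply', ih, hadd]
  have hsum : ∀ (s : Finset ℕ) (f : ℕ → R),
      D (∑ i ∈ s, f i) = ∑ i ∈ s, D (f i) := by
    intro s f
    induction s using Finset.cons_induction with
    | empty => simpa using h0
    | cons x s hx ih => rw [Finset.sum_cons, Finset.sum_cons, hadd, ih]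
  -- general Leibniz formula for iterates
  have leibniz : ∀ (n : ℕ) (a b : R),
      D^[n] (a * b) = ∑ m ∈ range (n + 1),
        (n.choose m : R) * (D^[m] a * D^[n - m] b) := by
    intro n a b
    induction n with
    | zero => simp
    | succ n ih =>
      have hD : ∀ i ∈ range (n + 1),
          D ((n.choose i : R) * (D^[i] a * D^[n - i] b)) =
            (n.choose i : R) * (D^[i] a * D^[n + 1 - i] b)
            + (n.choose i : R) * (D^[i + 1] a * D^[n - i] b) := by
        intro i hi
        have h_le : i ≤ n := le_of_lt_succ (mem_range.mp hi)
        rw [hconst, hmul, ← Function.iterate_succ_apply' D (n - i) b,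
          ← Function.iterate_succ_apply' D i a]
        have hni : (n - i).succ = n + 1 - i := by omega
        rw [hni]
        ring
      have key : ∑ m ∈ range (n + 1 + 1),
            ((n + 1).choose m : R) * (D^[m] a * D^[n + 1 - m] b)
          = (∑ i ∈ range (n + 1), (n.choose i : R) * (D^[i] a * D^[n + 1 - i] b))
            + ∑ i ∈ range (n + 1), (n.choose i : R) * (D^[i + 1] a * D^[n - i] b) := by
        rw [sum_range_succ' (fun m => ((n + 1).choose m : R) * (D^[m] a * D^[n + 1 - m] b))
          (n + 1)]
        have hstep : ∀ i ∈ range (n + 1),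
            (((n + 1).choose (i + 1) : R)) * (D^[i + 1] a * D^[n + 1 - (i + 1)] b)
            = (n.choose i : R) * (D^[i + 1] a * D^[n - i] b)
              + (n.choose (i + 1) : R) * (D^[i + 1] a * D^[n - i] b) := by
          intro i hi
          have hss : n + 1 - (i + 1) = n - i := Nat.succ_sub_succ n i
          rw [hss, choose_succ_succ', cast_add, add_mul]
        rw [sum_congr rfl hstep, sum_add_distrib]
        have hS1 : (∑ i ∈ range (n + 1),
              (n.choose (i + 1) : R) * (D^[i + 1] a * D^[n - i] b))
            + (n.choose 0 : R) * (D^[0] a * D^[n + 1 - 0] b)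
            = ∑ i ∈ range (n + 1), (n.choose i : R) * (D^[i] a * D^[n + 1 - i] b) := by
          have hconv : ∀ i ∈ range (n + 1),
              (n.choose (i + 1) : R) * (D^[i + 1] a * D^[n - i] b)
              = (n.choose (i + 1) : R) * (D^[i + 1] a * D^[n + 1 - (i + 1)] b) := by
            intro i hi
            rw [Nat.succ_sub_succ]
          rw [sum_congr rfl hconv, ← sum_range_succ' (fun m => (n.choose m : R) * (D^[m] a * D^[n + 1 - m] b)) (n + 1),
            sum_range_succ]
          simp [Nat.choose_succ_self]
        have hz : (((n + 1).choose 0 : R)) * (D^[0] a * D^[n + 1 - 0] b)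
            = (n.choose 0 : R) * (D^[0] a * D^[n + 1 - 0] b) := by simp
        rw [hz, ← hS1]
        ring
      rw [Function.iterate_succ_apply', ih, hsum, sum_congr rfl hD, sum_add_distrib, key]
  refine ⟨hiter_add p, fun a b => ?_⟩
  have hp : p.Prime := Fact.out
  rw [leibniz p a b, sum_range_succ, Finset.sum_eq_single 0]
  · simp [mul_comm]
  · intro i hi hne
    have hi' : i < p := mem_range.mp hi
    have hzero : (p.choose i : R) = 0 := by
      obtain ⟨c, hc⟩ := hp.dvd_choose_self hne hi'
      rw [hc]; push_cast; rw [CharP.cast_eq_zero R p, zero_mul]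
    rw [hzero, zero_mul]
  · intro h
    exact absurd (mem_range.mpr hp.pos) h
end

section
/- Let p be a prime and consider the derivation δ of the polynomial ring 𝔽_p[x] determined by δ(x) = x^p − x. Then δ^p = δ, i.e., the p-fold composite of δ equals δ. (Equivalently, δ^p = (−1)^{p−1} δ, since (−1)^{p−1} = 1 in characteristic p.) -/
open Polynomial Finset

section Aux

variable {R A : Type*} [CommRing R] [CommRing A] [Algebra R A]

lemma iterate_leibniz (D : Derivation R A A) (n : ℕ) (p q : A) :
    D^[n] (p * q) =
      ∑ k ∈ range n.succ, n.choose k • (D^[n - k] p * D^[k] q) := by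
  have hns : ∀ (m : ℕ) (x : A), D (m • x) = m • D x := fun m x =>
    D.toLinearMap.map_smul_of_tower m x
  have hD : ∀ x y : A, D (x * y) = D x * y + x * D y := by
    intro x y; rw [D.leibniz, smul_eq_mul, smul_eq_mul]; ring
  induction n with
  | zero => simp [Finset.range]
  | succ n IH =>
    calc
      D^[n + 1] (p * q) =
          D (∑ k ∈ range n.succ, n.choose k • (D^[n - k] p * D^[k] q)) := by
        rw [Function.iterate_succ_apply', IH]
      _ = (∑ k ∈ range n.succ, n.choose k • (D^[n - k + 1] p * D^[k] q)) +
          ∑ k ∈ range n.succ, n.choose k • (D^[n - k] p * D^[k + 1] q) := by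
        rw [map_sum]
        simp_rw [hns, hD, Function.iterate_succ_apply' D, smul_add, sum_add_distrib]
      _ = (∑ k ∈ range n.succ, n.choose k.succ • (D^[n - k] p * D^[k + 1] q)) +
              1 • (D^[n + 1] p * D^[0] q) +
            ∑ k ∈ range n.succ, n.choose k • (D^[n - k] p * D^[k + 1] q) := ?_
      _ = ((∑ k ∈ range n.succ, n.choose k • (D^[n - k] p * D^[k + 1] q)) +
              ∑ k ∈ range n.succ, n.choose k.succ • (D^[n - k] p * D^[k + 1] q)) +
            1 • (D^[n + 1] p * D^[0] q) := by
        rw [add_comm, add_assoc]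
      _ = (∑ i ∈ range n.succ,
              (n + 1).choose (i + 1) • (D^[n + 1 - (i + 1)] p * D^[i + 1] q)) +
            1 • (D^[n + 1] p * D^[0] q) := by
        simp_rw [Nat.choose_succ_succ, Nat.succ_sub_succ, add_smul, sum_add_distrib]
      _ = ∑ k ∈ range n.succ.succ, n.succ.choose k • (D^[n.succ - k] p * D^[k] q) := by
        rw [sum_range_succ' _ n.succ, Nat.choose_zero_right, tsub_zero]
    congr
    refine (sum_range_succ' _ _).trans (congr_arg₂ (· + ·) ?_ ?_)
    · rw [sum_range_succ, Nat.choose_succ_self, zero_smul, add_zero]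
      refine sum_congr rfl fun k hk => ?_
      rw [mem_range] at hk
      congr
      omega
    · rw [Nat.choose_zero_right, tsub_zero]

/-- Hochschild: in characteristic `p`, the `p`-th iterate of a derivation is a derivation. -/
lemma iterate_p_leibniz (D : Derivation R A A) (p : ℕ) (hp : p.Prime) [CharP A p]
    (a b : A) : D^[p] (a * b) = D^[p] a * b + a * D^[p] b := by
  rw [iterate_leibniz]
  rw [Finset.sum_eq_add_of_mem 0 p (by simp) (by simp [hp.pos]) hp.pos.ne ?_]
  · simp [Nat.choose_self]
  · intro k hk hk'
    rw [Finset.mem_range] at hk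
    have h0 : k ≠ 0 := hk'.1
    have h1 : k ≠ p := hk'.2
    have : (p : A) = 0 := CharP.cast_eq_zero A p
    have hdvd : p ∣ p.choose k := hp.dvd_choose_self h0 (by omega)
    obtain ⟨c, hc⟩ := hdvd
    rw [hc, mul_nsmul, ← Nat.cast_smul_eq_nsmul A p, this, zero_smul, smul_zero]

end Aux

noncomputable section

variable (p : ℕ) [Fact p.Prime]

/-- The Hirokado derivation as a `Derivation`. -/
noncomputable def hirD : Derivation (ZMod p) (ZMod p)[X] (ZMod p)[X] :=
  Polynomial.mkDerivation (ZMod p) (X ^ p - X)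

lemma hirD_apply (f : (ZMod p)[X]) : hirD p f = (X ^ p - X) * derivative f := by
  rw [hirD, Polynomial.mkDerivation_apply, smul_eq_mul, mul_comm]

lemma hirD_X : hirD p X = X ^ p - X := by simp [hirD]

lemma hirD_iterate_X (k : ℕ) : (hirD p)^[k + 1] X = (-1) ^ k • (X ^ p - X : (ZMod p)[X]) := by
  induction k with
  | zero => simp [hirD_X]
  | succ k IH =>
    rw [Function.iterate_succ_apply', IH]
    have : (hirD p) (X ^ p - X : (ZMod p)[X]) = -(X ^ p - X) := by
      rw [hirD_apply]
      have hp : ((p : ZMod p)) = 0 := ZMod.natCast_self p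
      simp [derivative_X_pow, hp]
    rw [map_zsmul, this, pow_succ]
    module

/-- The p-th iterate as a derivation. -/
noncomputable def hirDp : Derivation (ZMod p) (ZMod p)[X] (ZMod p)[X] where
  toLinearMap := ((hirD p).toLinearMap ^ p : Module.End (ZMod p) (ZMod p)[X])
  map_one_eq_zero' := by
    have hp : 0 < p := (Fact.out : p.Prime).pos
    simp only [Module.End.pow_apply, Derivation.coeFn_coe]
    obtain ⟨m, rfl⟩ : ∃ m, p = m + 1 := ⟨p - 1, by omega⟩
    rw [Function.iterate_succ_apply, Derivation.map_one_eq_zero]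
    exact Function.iterate_fixed (map_zero _) m
  leibniz' := fun a b => by
    simp only [Module.End.pow_apply, Derivation.coeFn_coe]
    rw [iterate_p_leibniz (hirD p) p (Fact.out : p.Prime) a b, smul_eq_mul, smul_eq_mul]
    ring

lemma hirDp_eq : hirDp p = hirD p := by
  apply Polynomial.derivation_ext
  show ((hirD p).toLinearMap ^ p) X = hirD p X
  rw [Module.End.pow_apply]
  simp only [Derivation.coeFn_coe]
  have hpos := (Fact.out : p.Prime).pos
  obtain ⟨m, rfl⟩ : ∃ m, p = m + 1 := ⟨p - 1, by omega⟩
  rw [hirD_iterate_X, hirD_X]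
  rcases Nat.even_or_odd m with he | ho
  · rw [he.neg_one_pow, one_smul]
  · have hm1 : m = 1 := by
      rcases (Fact.out : (m + 1).Prime).eq_two_or_odd' with h | hodd
      · omega
      · exfalso; rw [Nat.odd_iff] at ho hodd; omega
    subst hm1
    rw [ho.neg_one_pow, neg_smul, one_smul]
    exact CharTwo.neg_eq _

end

/-- The derivation δ = (x^p − x) d/dx of 𝔽_p[x] satisfies δ^p = δ. -/
theorem hirokado_derivation_p_closed
    (p : ℕ) [Fact p.Prime] :
    (fun f : (ZMod p)[X] => (X ^ p - X) * derivative f)^[p] =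
      fun f : (ZMod p)[X] => (X ^ p - X) * derivative f := by
  have h1 : (fun f : (ZMod p)[X] => (X ^ p - X) * derivative f) = ⇑(hirD p) := by
    funext f; rw [hirD_apply]
  rw [h1]
  have h2 : ∀ f, (⇑(hirD p))^[p] f = hirDp p f := by
    intro f
    have h : hirDp p f = ((hirD p).toLinearMap ^ p) f := rfl
    rw [h, Module.End.pow_apply, Derivation.coeFn_coe]
  funext f
  rw [h2 f, hirDp_eq]
end
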